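/- Let G be a countable amenable group, H a finite index subgroup of G, and K ⊆ G a fundamental domain for H (i.e. |Hg ∩ K| = 1 for every g ∈ G). If B ⊆ G is a union of right cosets of H (i.e. B = HB), then the upper and lower Banach densities of B coincide and equal |B ∩ K|/|K|. -/

import Mathlib

open Filter
open scoped symmDiff

/-- The upper Banach density `D*(A) = inf_{F finite nonempty} sup_{g ∈ G} |A ∩ Fg|/|F|`. -/
noncomputable def upperBanachDensity {G : Type*} [Group G] (A : Set G) : ℝ :=
  ⨅ F : {F : Finset G // F.Nonempty},
    ⨆ g : G, ((A ∩ ((fun f => f * g) '' (F.1 : Set G))).ncard : ℝ) / F.1.card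

/-- The lower Banach density `D_*(A) = 1 − D*(G \ A)`. -/
noncomputable def lowerBanachDensity {G : Type*} [Group G] (A : Set G) : ℝ :=
  1 - upperBanachDensity Aᶜ

section Aux
variable {G : Type*} [Group G] [DecidableEq G]
set_option linter.unusedSectionVars false


variable {G : Type*} [Group G] [DecidableEq G]

set_option linter.unusedSectionVars false

theorem ncard_inter_coe (B : Set G) (T : Finset G) [DecidablePred (· ∈ B)] :
    (B ∩ ↑T).ncard = (T.filter (· ∈ B)).card := by
  have h : B ∩ ↑T = ↑(T.filter (· ∈ B)) := by
    ext x; simp [Finset.mem_filter, and_comm]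
  rw [h, Set.ncard_coe_finset]

theorem count_translate (H : Subgroup G) (K : Finset G)
    (hK : ∀ g : G, ∃! k, k ∈ K ∧ k * g⁻¹ ∈ H)
    (B : Set G) (hB : ∀ g ∈ B, ∀ h ∈ H, h * g ∈ B) [DecidablePred (· ∈ B)] (g : G) :
    ((K.image (· * g)).filter (· ∈ B)).card = (K.filter (· ∈ B)).card := by
  classical
  symm
  apply Finset.card_bij (fun k _ => (hK (k * g⁻¹)).choose * g)
  · intro k hk
    obtain ⟨hkK, hkB⟩ := Finset.mem_filter.mp hk
    obtain ⟨⟨hcK, hcH⟩, -⟩ := (hK (k * g⁻¹)).choose_spec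
    refine Finset.mem_filter.mpr ⟨Finset.mem_image_of_mem _ hcK, ?_⟩
    have e : (hK (k * g⁻¹)).choose * g = ((hK (k * g⁻¹)).choose * (k * g⁻¹)⁻¹) * k := by
      group
    rw [e]
    exact hB k hkB _ hcH
  · intro k₁ hk₁ k₂ hk₂ heq
    obtain ⟨hk₁K, -⟩ := Finset.mem_filter.mp hk₁
    obtain ⟨hk₂K, -⟩ := Finset.mem_filter.mp hk₂
    have heq' : (hK (k₁ * g⁻¹)).choose = (hK (k₂ * g⁻¹)).choose :=
      mul_right_cancel heq
    obtain ⟨⟨hc1K, hc1H⟩, -⟩ := (hK (k₁ * g⁻¹)).choose_spec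
    obtain ⟨⟨hc2K, hc2H⟩, -⟩ := (hK (k₂ * g⁻¹)).choose_spec
    rw [heq'] at hc1H
    have e : ((hK (k₂ * g⁻¹)).choose * (k₂ * g⁻¹)⁻¹)⁻¹ *
        ((hK (k₂ * g⁻¹)).choose * (k₁ * g⁻¹)⁻¹) = k₂ * k₁⁻¹ := by group
    have h21 : k₂ * k₁⁻¹ ∈ H := e ▸ H.mul_mem (H.inv_mem hc2H) hc1H
    exact (hK k₁).unique ⟨hk₁K, by simpa using H.one_mem⟩ ⟨hk₂K, h21⟩
  · intro b hb
    obtain ⟨hbK, hbB⟩ := Finset.mem_filter.mp hb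
    obtain ⟨k₀, hk₀K, rfl⟩ := Finset.mem_image.mp hbK
    obtain ⟨⟨haK, haH⟩, -⟩ := (hK (k₀ * g)).choose_spec
    set a := (hK (k₀ * g)).choose with ha
    have haB : a ∈ B := by
      have e : a = (a * (k₀ * g)⁻¹) * (k₀ * g) := by group
      rw [e]; exact hB _ hbB _ haH
    refine ⟨a, Finset.mem_filter.mpr ⟨haK, haB⟩, ?_⟩
    have hk₀H : k₀ * (a * g⁻¹)⁻¹ ∈ H := by
      have e : k₀ * (a * g⁻¹)⁻¹ = (a * (k₀ * g)⁻¹)⁻¹ := by group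
      rw [e]; exact H.inv_mem haH
    have : (hK (a * g⁻¹)).choose = k₀ :=
      (hK (a * g⁻¹)).unique (hK (a * g⁻¹)).choose_spec.1 ⟨hk₀K, hk₀H⟩
    exact congrArg (· * g) this

/-- For a *normal* subgroup `N` with fundamental domain `S` and `N`-invariant `B`,
left translation preserves the count. -/
theorem count_left_translate (N : Subgroup G) [hN : N.Normal] (S : Finset G)
    (hS : ∀ g : G, ∃! s, s ∈ S ∧ s * g⁻¹ ∈ N)
    (B : Set G) (hB : ∀ g ∈ B, ∀ h ∈ N, h * g ∈ B) [DecidablePred (· ∈ B)] (f : G) :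
    (S.filter (fun s => f * s ∈ B)).card = (S.filter (· ∈ B)).card := by
  classical
  apply Finset.card_bij (fun s _ => (hS (f * s)).choose)
  · intro s hs
    obtain ⟨hsS, hsB⟩ := Finset.mem_filter.mp hs
    obtain ⟨⟨hcS, hcN⟩, -⟩ := (hS (f * s)).choose_spec
    refine Finset.mem_filter.mpr ⟨hcS, ?_⟩
    have e : (hS (f * s)).choose = ((hS (f * s)).choose * (f * s)⁻¹) * (f * s) := by group
    rw [e]; exact hB _ hsB _ hcN
  · intro s₁ hs₁ s₂ hs₂ heq
    obtain ⟨hs₁S, -⟩ := Finset.mem_filter.mp hs₁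
    obtain ⟨hs₂S, -⟩ := Finset.mem_filter.mp hs₂
    obtain ⟨⟨hc1S, hc1N⟩, -⟩ := (hS (f * s₁)).choose_spec
    obtain ⟨⟨hc2S, hc2N⟩, -⟩ := (hS (f * s₂)).choose_spec
    rw [heq] at hc1N
    have h21 : f * (s₂ * s₁⁻¹) * f⁻¹ ∈ N := by
      have e : ((hS (f * s₂)).choose * (f * s₂)⁻¹)⁻¹ *
          ((hS (f * s₂)).choose * (f * s₁)⁻¹) = f * (s₂ * s₁⁻¹) * f⁻¹ := by group
      exact e ▸ N.mul_mem (N.inv_mem hc2N) hc1N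
    have h21' : s₂ * s₁⁻¹ ∈ N := by
      have := hN.conj_mem _ h21 f⁻¹
      simpa [mul_assoc] using this
    exact (hS s₁).unique ⟨hs₁S, by simpa using N.one_mem⟩ ⟨hs₂S, h21'⟩
  · intro t ht
    obtain ⟨htS, htB⟩ := Finset.mem_filter.mp ht
    obtain ⟨⟨hsS, hsN⟩, -⟩ := (hS (f⁻¹ * t)).choose_spec
    set s := (hS (f⁻¹ * t)).choose with hsdef
    have hfs : f * s = (f * (s * (f⁻¹ * t)⁻¹) * f⁻¹) * t := by group
    have hfsN : f * (s * (f⁻¹ * t)⁻¹) * f⁻¹ ∈ N := hN.conj_mem _ hsN f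
    have hfsB : f * s ∈ B := by rw [hfs]; exact hB _ htB _ hfsN
    refine ⟨s, Finset.mem_filter.mpr ⟨hsS, hfsB⟩, ?_⟩
    have htN : t * (f * s)⁻¹ ∈ N := by
      have e : t * (f * s)⁻¹ = (f * (s * (f⁻¹ * t)⁻¹) * f⁻¹)⁻¹ := by rw [hfs]; group
      rw [e]; exact N.inv_mem hfsN
    exact (hS (f * s)).unique (hS (f * s)).choose_spec.1 ⟨htS, htN⟩

theorem upperBanachDensity_le (H : Subgroup G) (K : Finset G)
    (hK : ∀ g : G, ∃! k, k ∈ K ∧ k * g⁻¹ ∈ H)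
    (B : Set G) (hB : ∀ g ∈ B, ∀ h ∈ H, h * g ∈ B) :
    upperBanachDensity B ≤ ((B ∩ ↑K).ncard : ℝ) / K.card := by
  classical
  haveI : Nonempty G := ⟨1⟩
  have hKne : K.Nonempty := ⟨(hK 1).exists.choose, (hK 1).exists.choose_spec.1⟩
  have hbdd : BddBelow (Set.range fun F : {F : Finset G // F.Nonempty} =>
      ⨆ g : G, ((B ∩ ((fun f => f * g) '' (F.1 : Set G))).ncard : ℝ) / F.1.card) := by
    refine ⟨0, ?_⟩
    rintro x ⟨F, rfl⟩
    exact Real.iSup_nonneg fun g => by positivity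
  rw [upperBanachDensity]
  refine le_trans (ciInf_le hbdd ⟨K, hKne⟩) ?_
  have hval : (fun g : G => ((B ∩ ((fun f => f * g) '' (K : Set G))).ncard : ℝ) / K.card)
      = fun _ : G => ((B ∩ ↑K).ncard : ℝ) / K.card := by
    funext g
    have himg : (fun f => f * g) '' (K : Set G) = ↑(K.image (· * g)) := by
      simp [Finset.coe_image]
    rw [himg, ncard_inter_coe, count_translate H K hK B hB g, ← ncard_inter_coe]
  simp only [hval]
  rw [ciSup_const]

theorem le_upperBanachDensity (N : Subgroup G) [hN : N.Normal] (S : Finset G)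
    (hS : ∀ g : G, ∃! s, s ∈ S ∧ s * g⁻¹ ∈ N)
    (B : Set G) (hB : ∀ g ∈ B, ∀ h ∈ N, h * g ∈ B) :
    ((B ∩ ↑S).ncard : ℝ) / S.card ≤ upperBanachDensity B := by
  classical
  haveI : Nonempty G := ⟨1⟩
  have hSne : S.Nonempty := ⟨(hS 1).exists.choose, (hS 1).exists.choose_spec.1⟩
  have hm : (0:ℝ) < S.card := by exact_mod_cast hSne.card_pos
  haveI : Nonempty {F : Finset G // F.Nonempty} := ⟨⟨{1}, Finset.singleton_nonempty 1⟩⟩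
  rw [upperBanachDensity]
  refine le_ciInf ?_
  rintro ⟨F, hF⟩
  have hn : (0:ℝ) < F.card := by exact_mod_cast hF.card_pos
  have hsum : ∑ s ∈ S, ((F.image (· * s)).filter (· ∈ B)).card
      = F.card * (S.filter (· ∈ B)).card := by
    have h1 : ∀ s : G, ((F.image (· * s)).filter (· ∈ B)).card
        = (F.filter (fun f => f * s ∈ B)).card := by
      intro s
      rw [Finset.filter_image, Finset.card_image_of_injective _ (mul_left_injective s)]
    have h2 : ∀ f : G, (S.filter (fun s => f * s ∈ B)).card = (S.filter (· ∈ B)).card :=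
      count_left_translate N S hS B hB
    calc ∑ s ∈ S, ((F.image (· * s)).filter (· ∈ B)).card
        = ∑ s ∈ S, ∑ f ∈ F, if f * s ∈ B then 1 else 0 := by
          simp only [h1, Finset.card_filter]
      _ = ∑ f ∈ F, ∑ s ∈ S, if f * s ∈ B then 1 else 0 := Finset.sum_comm
      _ = ∑ f ∈ F, (S.filter (· ∈ B)).card := by
          refine Finset.sum_congr rfl fun f _ => ?_
          rw [← Finset.card_filter]
          exact h2 f
      _ = F.card * (S.filter (· ∈ B)).card := by rw [Finset.sum_const, smul_eq_mul]
  obtain ⟨g₀, hg₀S, hg₀⟩ := Finset.exists_le_of_sum_le (f := fun _ : G =>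
      ((B ∩ ↑S).ncard : ℝ) / S.card * F.card)
      (g := fun s => ((((F.image (· * s)).filter (· ∈ B)).card : ℝ))) hSne (by
    rw [Finset.sum_const, nsmul_eq_mul]
    have : (∑ s ∈ S, ((((F.image (· * s)).filter (· ∈ B)).card : ℝ)))
        = (F.card : ℝ) * (S.filter (· ∈ B)).card := by
      rw [← Nat.cast_sum]
      exact_mod_cast congrArg (Nat.cast : ℕ → ℝ) hsum
    rw [this, ncard_inter_coe]
    field_simp
    exact le_refl _)
  have hbdd : BddAbove (Set.range fun g : G =>
      ((B ∩ ((fun f => f * g) '' (F : Set G))).ncard : ℝ) / F.card) := by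
    refine ⟨1, ?_⟩
    rintro x ⟨g, rfl⟩
    rw [div_le_one hn]
    have himg : (fun f => f * g) '' (F : Set G) = ↑(F.image (· * g)) := by
      simp [Finset.coe_image]
    rw [himg, ncard_inter_coe]
    exact_mod_cast (Finset.card_filter_le _ _).trans (Finset.card_image_le)
  refine le_trans ?_ (le_ciSup hbdd g₀)
  have himg : (fun f => f * g₀) '' (F : Set G) = ↑(F.image (· * g₀)) := by
    simp [Finset.coe_image]
  rw [← ncard_inter_coe] at hg₀
  rw [himg, le_div_iff₀ hn]
  exact hg₀


end Aux

section Main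

variable {G : Type*} [Group G] [DecidableEq G]
set_option linter.unusedSectionVars false

theorem compl_count (B : Set G) (T : Finset G) :
    ((Bᶜ ∩ ↑T).ncard : ℝ) = T.card - ((B ∩ ↑T).ncard : ℝ) := by
  classical
  have h : (B ∩ ↑T).ncard + (Bᶜ ∩ ↑T).ncard = T.card := by
    rw [ncard_inter_coe, ncard_inter_coe]
    have := Finset.card_filter_add_card_filter_not (s := T) (p := (· ∈ B))
    simpa using this
  have h' := congrArg (Nat.cast : ℕ → ℝ) h
  push_cast at h'
  linarith

end Main

theorem banach_density_of_union_of_cosets {G : Type*} [Group G] [Countable G] [DecidableEq G]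
    (hamen : ∃ F : ℕ → Finset G, (∀ n, (F n).Nonempty) ∧ ∀ a : G, Tendsto
      (fun n => ((((F n).image (a * ·)) ∆ (F n)).card : ℝ) / (F n).card) atTop (nhds 0))
    (H : Subgroup G) (hfi : H.FiniteIndex)
    (K : Finset G) (hK : ∀ g : G, ∃! k, k ∈ K ∧ k * g⁻¹ ∈ H)
    (B : Set G) (hB : ∀ g ∈ B, ∀ h ∈ H, h * g ∈ B) :
    upperBanachDensity B = ((B ∩ ↑K).ncard : ℝ) / K.card ∧
      lowerBanachDensity B = ((B ∩ ↑K).ncard : ℝ) / K.card := by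
  classical
  haveI := hfi
  set N := H.normalCore with hNdef
  haveI hN : N.Normal := H.normalCore_normal
  haveI hNfi : N.FiniteIndex := Subgroup.finiteIndex_normalCore H
  haveI hQfin : Finite (G ⧸ N) := Subgroup.finite_quotient_of_finiteIndex (H := N)
  -- a fundamental domain for N
  have hfin : (Set.range (fun q : G ⧸ N => q.out)).Finite := Set.finite_range _
  set S : Finset G := hfin.toFinset with hSdef
  have hS : ∀ g : G, ∃! s, s ∈ S ∧ s * g⁻¹ ∈ N := by
    intro g
    refine ⟨(QuotientGroup.mk g : G ⧸ N).out, ⟨?_, ?_⟩, ?_⟩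
    · rw [hSdef, Set.Finite.mem_toFinset]
      exact Set.mem_range_self _
    · have h2 : g⁻¹ * (QuotientGroup.mk g : G ⧸ N).out ∈ N := by
        rw [← QuotientGroup.eq]
        exact (Quotient.out_eq' _).symm
      exact hN.mem_comm_iff.mp h2
    · rintro s ⟨hsS, hsN⟩
      rw [hSdef, Set.Finite.mem_toFinset] at hsS
      obtain ⟨q, rfl⟩ := hsS
      have h2 : g⁻¹ * q.out ∈ N := hN.mem_comm_iff.mpr hsN
      have h3 : (QuotientGroup.mk g : G ⧸ N) = QuotientGroup.mk q.out :=
        QuotientGroup.eq.mpr h2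
      have h4 : (QuotientGroup.mk (Quotient.out q) : G ⧸ N) = q := Quotient.out_eq' q
      rw [h4] at h3
      show Quotient.out q = Quotient.out (QuotientGroup.mk g)
      rw [h3]
  -- invariance facts
  have hBN : ∀ g ∈ B, ∀ h ∈ N, h * g ∈ B := fun g hg h hh => hB g hg h (H.normalCore_le hh)
  have hBc : ∀ g ∈ Bᶜ, ∀ h ∈ H, h * g ∈ Bᶜ := by
    intro g hg h hh hmem
    have hgg := hB (h * g) hmem h⁻¹ (H.inv_mem hh)
    rw [inv_mul_cancel_left] at hgg
    exact hg hgg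
  have hBcN : ∀ g ∈ Bᶜ, ∀ h ∈ N, h * g ∈ Bᶜ := fun g hg h hh => hBc g hg h (H.normalCore_le hh)
  -- nonemptiness / positivity
  have hKne : K.Nonempty := ⟨(hK 1).exists.choose, (hK 1).exists.choose_spec.1⟩
  have hSne : S.Nonempty := ⟨(hS 1).exists.choose, (hS 1).exists.choose_spec.1⟩
  have hn : (0:ℝ) < K.card := by exact_mod_cast hKne.card_pos
  have hm : (0:ℝ) < S.card := by exact_mod_cast hSne.card_pos
  set r : ℝ := ((B ∩ ↑K).ncard : ℝ) with hr
  set c : ℝ := ((B ∩ ↑S).ncard : ℝ) with hc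
  have e1 : upperBanachDensity B ≤ r / K.card := upperBanachDensity_le H K hK B hB
  have e2 : upperBanachDensity B ≤ c / S.card := upperBanachDensity_le N S hS B hBN
  have e3 : c / S.card ≤ upperBanachDensity B := le_upperBanachDensity N S hS B hBN
  have e4 : upperBanachDensity Bᶜ ≤ ((Bᶜ ∩ ↑K).ncard : ℝ) / K.card :=
    upperBanachDensity_le H K hK Bᶜ hBc
  have e5 : ((Bᶜ ∩ ↑S).ncard : ℝ) / S.card ≤ upperBanachDensity Bᶜ :=
    le_upperBanachDensity N S hS Bᶜ hBcN
  have e6 : upperBanachDensity Bᶜ ≤ ((Bᶜ ∩ ↑S).ncard : ℝ) / S.card :=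
    upperBanachDensity_le N S hS Bᶜ hBcN
  rw [compl_count B K, ← hr] at e4
  rw [compl_count B S, ← hc] at e5 e6
  have hDB : upperBanachDensity B = c / S.card := le_antisymm e2 e3
  have hDBc : upperBanachDensity Bᶜ = ((S.card : ℝ) - c) / S.card := le_antisymm e6 e5
  have hsplit1 : ((K.card : ℝ) - r) / K.card = 1 - r / K.card := by
    rw [sub_div, div_self hn.ne']
  have hsplit2 : ((S.card : ℝ) - c) / S.card = 1 - c / S.card := by
    rw [sub_div, div_self hm.ne']
  have key : c / S.card = r / K.card := by
    have h1 : c / S.card ≤ r / K.card := hDB ▸ e1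
    have h2 : 1 - c / S.card ≤ 1 - r / K.card := by
      rw [← hsplit1, ← hsplit2]
      exact le_trans e5 e4
    linarith
  refine ⟨by rw [hDB, key], ?_⟩
  rw [lowerBanachDensity, hDBc, hsplit2, ← key]
  ring
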